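/- Let u and v be two bounded, nonnegative, measurable functions on ℝ^n and suppose that v is symmetric, i.e. v(−y) = v(y) for all y. Then for every λ ∈ [0,1), ∫∫ ⟨x, y⟩ u(x) v(y) f_{2n}(x,y;λ) dx dy ≥ 0. -/

import Mathlib

open MeasureTheory Real

/-- The density `f_{2n}(x, y; λ)` of the correlated pair of standard Gaussians. -/
noncomputable def gaussPairDensity (n : ℕ) (l : ℝ)
    (x y : EuclideanSpace ℝ (Fin n)) : ℝ :=
  (2 * π) ^ (-(n : ℝ)) * (1 - l ^ 2) ^ (-(n : ℝ) / 2) *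
    Real.exp (-(‖x‖ ^ 2 + ‖y‖ ^ 2 - 2 * l * (inner ℝ x y : ℝ)) / (2 * (1 - l ^ 2)))

lemma gauss_key (n : ℕ) (l : ℝ) (hl0 : 0 ≤ l) (hl1 : l < 1)
    (x y : EuclideanSpace ℝ (Fin n)) :
    0 ≤ (inner ℝ x y : ℝ) * (gaussPairDensity n l x y - gaussPairDensity n l x (-y)) := by
  have hl2 : (0:ℝ) < 1 - l ^ 2 := by nlinarith
  have hD : (0:ℝ) < 2 * (1 - l ^ 2) := by linarith
  have hC : 0 ≤ (2 * π) ^ (-(n : ℝ)) * (1 - l ^ 2) ^ (-(n : ℝ) / 2) := by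
    have := Real.pi_pos; positivity
  set t : ℝ := (inner ℝ x y : ℝ) with ht
  unfold gaussPairDensity
  rw [norm_neg, inner_neg_right, ← ht]
  set C : ℝ := (2 * π) ^ (-(n : ℝ)) * (1 - l ^ 2) ^ (-(n : ℝ) / 2) with hCdef
  set e1 : ℝ := -(‖x‖ ^ 2 + ‖y‖ ^ 2 - 2 * l * t) / (2 * (1 - l ^ 2)) with he1
  set e2 : ℝ := -(‖x‖ ^ 2 + ‖y‖ ^ 2 - 2 * l * (-t)) / (2 * (1 - l ^ 2)) with he2
  rcases le_total 0 t with h | h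
  · have he : e2 ≤ e1 := by
      rw [he1, he2]; exact (div_le_div_iff_of_pos_right hD).mpr (by nlinarith)
    have := Real.exp_le_exp.mpr he
    have : C * Real.exp e2 ≤ C * Real.exp e1 := mul_le_mul_of_nonneg_left this hC
    exact mul_nonneg h (by linarith)
  · have he : e1 ≤ e2 := by
      rw [he1, he2]; exact (div_le_div_iff_of_pos_right hD).mpr (by nlinarith)
    have := Real.exp_le_exp.mpr he
    have : C * Real.exp e1 ≤ C * Real.exp e2 := mul_le_mul_of_nonneg_left this hC
    nlinarith

/-- For bounded nonnegative measurable `u, v` on ℝⁿ with `v` symmetric, and every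
`λ ∈ [0, 1)`, one has `∫∫ ⟨x,y⟩ u(x) v(y) f_{2n}(x,y;λ) dx dy ≥ 0`. -/
theorem inner_moment_nonneg (n : ℕ) (u v : EuclideanSpace ℝ (Fin n) → ℝ)
    (hum : Measurable u) (hub : ∃ M : ℝ, ∀ x, |u x| ≤ M) (hu0 : ∀ x, 0 ≤ u x)
    (hvm : Measurable v) (hvb : ∃ M : ℝ, ∀ x, |v x| ≤ M) (hv0 : ∀ x, 0 ≤ v x)
    (hvsymm : ∀ y, v (-y) = v y)
    (l : ℝ) (hl0 : 0 ≤ l) (hl1 : l < 1) :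
    0 ≤ ∫ x, ∫ y, (inner ℝ x y : ℝ) * u x * v y * gaussPairDensity n l x y := by
  apply integral_nonneg
  intro x
  simp only [Pi.zero_apply]
  set h : EuclideanSpace ℝ (Fin n) → ℝ :=
    fun y => (inner ℝ x y : ℝ) * u x * v y * gaussPairDensity n l x y with hh
  by_cases hint : Integrable h
  · have hint' : Integrable (fun y => h (-y)) := hint.comp_neg
    have hsum : ∀ y, 0 ≤ h y + h (-y) := by
      intro y
      have := gauss_key n l hl0 hl1 x y
      simp only [hh, inner_neg_right, hvsymm]
      have hu := hu0 x
      have hv := hv0 y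
      nlinarith [mul_nonneg (mul_nonneg hu hv) this]
    have key : (0:ℝ) ≤ ∫ y, (h y + h (-y)) := integral_nonneg hsum
    rw [integral_add hint hint', integral_neg_eq_self h volume] at key
    linarith
  · rw [integral_undef hint]
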